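/- arXiv:2310.11519 — 2 statements merged into one kernel-verified Lean document; each statement's English description precedes it below -/
import Mathlib

section
/- Let A be the 2-dimensional associative algebra over ℝ with basis {e₁, n₁} and multiplication e₁e₁ = e₁, e₁n₁ = n₁, and all other basis products zero (in particular n₁e₁ = 0, n₁n₁ = 0). Then A is associative, e₁ is an idempotent, n₁ spans a nilpotent ideal N with N² = 0, and for every x ∈ A the inner quadratic annihilator {a ∈ A : xax = 0} intersected with {s² : s ∈ ℝe₁} ∪ {n² : n ∈ N} equals eAe intersected with the same set for some idempotent e ∈ {0, e₁}. -/
/-- The 2-dimensional real algebra with basis `{e₁, n₁}` and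
multiplication `e₁e₁ = e₁`, `e₁n₁ = n₁`, `n₁e₁ = 0`, `n₁n₁ = 0` is an almost inner
Rickart algebra: `e₁` is idempotent, `N = ℝn₁` is a nilpotent ideal with `N·N = 0`,
and for every `x` the inner quadratic annihilator of `{x}` intersected with
`S² ∪ N²` equals `eAe ∩ (S² ∪ N²)` for some idempotent `e ∈ {0, e₁}`. -/
theorem stmt14 {A : Type*} [NonUnitalRing A] [Module ℝ A]
    [SMulCommClass ℝ A A] [IsScalarTower ℝ A A]
    (e₁ n₁ : A)
    (hind : LinearIndependent ℝ ![e₁, n₁])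
    (hspan : Submodule.span ℝ {e₁, n₁} = ⊤)
    (hee : e₁ * e₁ = e₁) (hen : e₁ * n₁ = n₁)
    (hne : n₁ * e₁ = 0) (hnn : n₁ * n₁ = 0) :
    e₁ * e₁ = e₁ ∧
    (∀ x : A, ∀ n ∈ Submodule.span ℝ {n₁},
      x * n ∈ Submodule.span ℝ {n₁} ∧ n * x ∈ Submodule.span ℝ {n₁}) ∧
    (∀ m ∈ Submodule.span ℝ {n₁}, ∀ n ∈ Submodule.span ℝ {n₁}, m * n = 0) ∧
    (∀ x : A, ∃ e : A, (e = 0 ∨ e = e₁) ∧ e * e = e ∧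
      {a : A | x * a * x = 0} ∩
        ({y : A | ∃ s ∈ Submodule.span ℝ {e₁}, y = s * s} ∪
         {y : A | ∃ n ∈ Submodule.span ℝ {n₁}, y = n * n}) =
      {y : A | ∃ z : A, y = e * z * e} ∩
        ({y : A | ∃ s ∈ Submodule.span ℝ {e₁}, y = s * s} ∪
         {y : A | ∃ n ∈ Submodule.span ℝ {n₁}, y = n * n})) := by
  have hmem : ∀ x : A, ∃ a b : ℝ, a • e₁ + b • n₁ = x := by
    intro x
    have hx : x ∈ Submodule.span ℝ ({e₁, n₁} : Set A) := by
      rw [hspan]; exact Submodule.mem_top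
    rwa [Submodule.mem_span_pair] at hx
  have hind' : ∀ a b : ℝ, a • e₁ + b • n₁ = 0 → a = 0 ∧ b = 0 := by
    intro a b h
    exact LinearIndependent.pair_iff.mp hind a b h
  -- every element of S² ∪ N² is a real multiple of e₁
  have hT : ∀ y : A,
      ((∃ s ∈ Submodule.span ℝ {e₁}, y = s * s) ∨
       (∃ n ∈ Submodule.span ℝ {n₁}, y = n * n)) → ∃ c : ℝ, y = c • e₁ := by
    rintro y (⟨s, hs, rfl⟩ | ⟨n, hn, rfl⟩)
    · rw [Submodule.mem_span_singleton] at hs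
      obtain ⟨c, rfl⟩ := hs
      exact ⟨c * c, by rw [smul_mul_assoc, mul_smul_comm, hee, smul_smul]⟩
    · rw [Submodule.mem_span_singleton] at hn
      obtain ⟨c, rfl⟩ := hn
      refine ⟨0, ?_⟩
      rw [smul_mul_assoc, mul_smul_comm, hnn, smul_zero, smul_zero, zero_smul]
  refine ⟨hee, ?_, ?_, ?_⟩
  · intro x n hn
    rw [Submodule.mem_span_singleton] at hn
    obtain ⟨c, rfl⟩ := hn
    obtain ⟨a, b, rfl⟩ := hmem x
    constructor
    · rw [Submodule.mem_span_singleton]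
      refine ⟨c * a, ?_⟩
      rw [add_mul, smul_mul_assoc, smul_mul_assoc, mul_smul_comm, mul_smul_comm,
        hen, hnn, smul_zero, smul_zero, add_zero, smul_smul, mul_comm c a]
    · rw [Submodule.mem_span_singleton]
      refine ⟨0, ?_⟩
      rw [mul_add, smul_mul_assoc, smul_mul_assoc, mul_smul_comm, mul_smul_comm,
        hne, hnn, smul_zero, smul_zero, smul_zero, smul_zero, add_zero, zero_smul]
  · intro m hm n hn
    rw [Submodule.mem_span_singleton] at hm hn
    obtain ⟨a, rfl⟩ := hm
    obtain ⟨b, rfl⟩ := hn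
    rw [smul_mul_assoc, mul_smul_comm, hnn, smul_zero, smul_zero]
  · intro x
    obtain ⟨α, β, rfl⟩ := hmem x
    set x := α • e₁ + β • n₁ with hxdef
    have hxe : x * e₁ * x = (α * α) • e₁ + (α * β) • n₁ := by
      rw [hxdef]
      rw [add_mul, smul_mul_assoc, smul_mul_assoc, hee, hne, smul_zero, add_zero]
      rw [smul_mul_assoc, mul_add, mul_smul_comm, mul_smul_comm, hee, hen,
        smul_add, smul_smul, smul_smul]
    by_cases hα : α = 0
    · -- x ∈ ℝn₁ : take e = e₁
      refine ⟨e₁, Or.inr rfl, hee, ?_⟩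
      have hzero : x * e₁ * x = 0 := by
        rw [hxe, hα, zero_mul, zero_mul, zero_smul, zero_smul, add_zero]
      ext y
      simp only [Set.mem_inter_iff, Set.mem_setOf_eq, Set.mem_union]
      constructor
      · rintro ⟨-, hy⟩
        obtain ⟨c, rfl⟩ := hT y hy
        refine ⟨⟨c • e₁, ?_⟩, hy⟩
        simp [mul_smul_comm, smul_mul_assoc, hee]
      · rintro ⟨-, hy⟩
        obtain ⟨c, rfl⟩ := hT y hy
        refine ⟨?_, hy⟩
        rw [mul_smul_comm, smul_mul_assoc, hzero, smul_zero]
    · -- α ≠ 0 : take e = 0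
      refine ⟨0, Or.inl rfl, by rw [mul_zero], ?_⟩
      ext y
      simp only [Set.mem_inter_iff, Set.mem_setOf_eq, Set.mem_union]
      constructor
      · rintro ⟨h0, hy⟩
        obtain ⟨c, rfl⟩ := hT y hy
        have : x * (c • e₁) * x = (c * (α * α)) • e₁ + (c * (α * β)) • n₁ := by
          rw [mul_smul_comm, smul_mul_assoc, hxe, smul_add, smul_smul, smul_smul]
        rw [this] at h0
        have hc := (hind' _ _ h0).1
        have hc0 : c = 0 := by
          rcases mul_eq_zero.mp hc with h | h
          · exact h
          · exact absurd (mul_self_eq_zero.mp h) hα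
        refine ⟨⟨0, by rw [hc0, zero_smul, zero_mul, mul_zero]⟩, hy⟩
      · rintro ⟨⟨z, rfl⟩, hy⟩
        refine ⟨?_, hy⟩
        rw [zero_mul, mul_zero, mul_zero, zero_mul]
end

section
/- Let A be the (n+1)-dimensional commutative associative algebra over a field F of characteristic ≠ 2 with basis {e, e₁, …, eₙ} and multiplication ee = e, eeᵢ = eᵢe = eᵢ, eᵢeⱼ = 0 for all i, j. Then A is associative and commutative, e is its unit, N = span{e₁,…,eₙ} is an ideal with N² = 0, and for every x ∈ A there is an idempotent f ∈ {0, e} with {a ∈ A : xax = 0} ∩ ({s² : s ∈ Fe} ∪ {n² : n ∈ N}) = fAf ∩ ({s² : s ∈ Fe} ∪ {n² : n ∈ N}). -/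
/-- The `(n+1)`-dimensional algebra over a field `F` (char ≠ 2) with
basis `{e, e₁, …, eₙ}` and multiplication `ee = e`, `eeᵢ = eᵢe = eᵢ`, `eᵢeⱼ = 0` is
commutative with unit `e`, `N = span{e₁,…,eₙ}` is an ideal with `N² = 0`, and for
every `x` the inner quadratic annihilator of `{x}` intersected with `S² ∪ N²`
equals `fAf ∩ (S² ∪ N²)` for some idempotent `f ∈ {0, e}`. -/
theorem stmt15 {F A : Type*} [Field F] [NonUnitalRing A] [Module F A]
    [SMulCommClass F A A] [IsScalarTower F A A]
    (h2 : (2 : F) ≠ 0)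
    (n : ℕ) (e : A) (ε : Fin n → A)
    (hind : LinearIndependent F (Fin.cons e ε : Fin (n + 1) → A))
    (hspan : Submodule.span F (Set.range (Fin.cons e ε : Fin (n + 1) → A)) = ⊤)
    (hee : e * e = e)
    (hei : ∀ i, e * ε i = ε i ∧ ε i * e = ε i)
    (hij : ∀ i j, ε i * ε j = 0) :
    (∀ x y : A, x * y = y * x) ∧
    (∀ x : A, e * x = x ∧ x * e = x) ∧
    (∀ x : A, ∀ m ∈ Submodule.span F (Set.range ε),
      x * m ∈ Submodule.span F (Set.range ε) ∧ m * x ∈ Submodule.span F (Set.range ε)) ∧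
    (∀ m ∈ Submodule.span F (Set.range ε), ∀ m' ∈ Submodule.span F (Set.range ε),
      m * m' = 0) ∧
    (∀ x : A, ∃ f : A, (f = 0 ∨ f = e) ∧ f * f = f ∧
      {a : A | x * a * x = 0} ∩
        ({y : A | ∃ s ∈ Submodule.span F {e}, y = s * s} ∪
         {y : A | ∃ m ∈ Submodule.span F (Set.range ε), y = m * m}) =
      {y : A | ∃ z : A, y = f * z * f} ∩
        ({y : A | ∃ s ∈ Submodule.span F {e}, y = s * s} ∪
         {y : A | ∃ m ∈ Submodule.span F (Set.range ε), y = m * m})) := by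
  classical
  set N := Submodule.span F (Set.range ε) with hN
  -- e acts as identity on N
  have hem : ∀ m ∈ N, e * m = m ∧ m * e = m := by
    intro m hm
    induction hm using Submodule.span_induction with
    | mem x hx => obtain ⟨i, rfl⟩ := hx; exact hei i
    | zero => simp
    | add x y hx hy ihx ihy =>
      constructor
      · rw [mul_add, ihx.1, ihy.1]
      · rw [add_mul, ihx.2, ihy.2]
    | smul c x hx ih =>
      constructor
      · rw [mul_smul_comm, ih.1]
      · rw [smul_mul_assoc, ih.2]
  -- N squares to zero
  have hNN : ∀ m ∈ N, ∀ m' ∈ N, m * m' = 0 := by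
    intro m hm
    induction hm using Submodule.span_induction with
    | mem x hx =>
      obtain ⟨i, rfl⟩ := hx
      intro m' hm'
      induction hm' using Submodule.span_induction with
      | mem y hy => obtain ⟨j, rfl⟩ := hy; exact hij i j
      | zero => simp
      | add a b ha hb iha ihb => rw [mul_add, iha, ihb, add_zero]
      | smul c a ha ih => rw [mul_smul_comm, ih, smul_zero]
    | zero => intro m' hm'; simp
    | add a b ha hb iha ihb =>
      intro m' hm'
      rw [add_mul, iha m' hm', ihb m' hm', add_zero]
    | smul c a ha ih =>
      intro m' hm'
      rw [smul_mul_assoc, ih m' hm', smul_zero]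
  -- decomposition
  have hdecomp : ∀ x : A, ∃ c : F, ∃ m ∈ N, x = c • e + m := by
    intro x
    have hx : x ∈ Submodule.span F (insert e (Set.range ε)) := by
      rw [← Fin.range_cons, hspan]; trivial
    rw [Submodule.span_insert, Submodule.mem_sup] at hx
    obtain ⟨y, hy, z, hz, rfl⟩ := hx
    rw [Submodule.mem_span_singleton] at hy
    obtain ⟨c, rfl⟩ := hy
    exact ⟨c, z, hz, rfl⟩
  have hcons := linearIndependent_fin_cons.mp hind
  have huniq : ∀ c : F, ∀ m ∈ N, c • e + m = 0 → c = 0 ∧ m = 0 := by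
    intro c m hm h
    have hc : c = 0 := by
      by_contra hc
      apply hcons.2
      have h1 : c • e = -m := eq_neg_of_add_eq_zero_left h
      have h2' : e = c⁻¹ • (-m) := by
        rw [← h1, smul_smul, inv_mul_cancel₀ hc, one_smul]
      rw [h2']
      exact Submodule.smul_mem _ _ (Submodule.neg_mem _ hm)
    refine ⟨hc, ?_⟩
    rw [hc, zero_smul, zero_add] at h
    exact h
  -- the multiplication formula
  have hmul : ∀ (c : F) (m : A), m ∈ N → ∀ (c' : F) (m' : A), m' ∈ N →
      (c • e + m) * (c' • e + m') = (c * c') • e + (c • m' + c' • m) := by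
    intro c m hm c' m' hm'
    rw [add_mul, mul_add, mul_add, smul_mul_assoc, smul_mul_assoc, mul_smul_comm,
      mul_smul_comm, hee, (hem m' hm').1, (hem m hm).2, hNN m hm m' hm', smul_smul,
      add_zero]
    abel
  -- commutativity
  have hcomm : ∀ x y : A, x * y = y * x := by
    intro x y
    obtain ⟨c, m, hm, rfl⟩ := hdecomp x
    obtain ⟨c', m', hm', rfl⟩ := hdecomp y
    rw [hmul c m hm c' m' hm', hmul c' m' hm' c m hm, mul_comm c c',
      add_comm (c • m') (c' • m)]
  -- unit
  have hunit : ∀ x : A, e * x = x ∧ x * e = x := by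
    intro x
    obtain ⟨c, m, hm, rfl⟩ := hdecomp x
    constructor
    · rw [mul_add, mul_smul_comm, hee, (hem m hm).1]
    · rw [add_mul, smul_mul_assoc, hee, (hem m hm).2]
  -- ideal
  have hideal : ∀ x : A, ∀ m ∈ N, x * m ∈ N ∧ m * x ∈ N := by
    intro x m' hm'
    obtain ⟨c, m, hm, rfl⟩ := hdecomp x
    constructor
    · rw [add_mul, smul_mul_assoc, (hem m' hm').1, hNN m hm m' hm', add_zero]
      exact Submodule.smul_mem _ _ hm'
    · rw [mul_add, mul_smul_comm, (hem m' hm').2, hNN m' hm' m hm, add_zero]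
      exact Submodule.smul_mem _ _ hm'
  refine ⟨hcomm, hunit, hideal, hNN, ?_⟩
  intro x
  obtain ⟨c, m, hm, rfl⟩ := hdecomp x
  by_cases hc : c = 0
  · -- x ∈ N : everything annihilates, take f = e
    subst hc
    rw [zero_smul, zero_add]
    refine ⟨e, Or.inr rfl, hee, ?_⟩
    have h1 : {a : A | m * a * m = 0} = Set.univ := by
      ext a
      simp only [Set.mem_setOf_eq, Set.mem_univ, iff_true]
      exact hNN _ (hideal a m hm).2 m hm
    have h1' : {y : A | ∃ z : A, y = e * z * e} = Set.univ := by
      ext y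
      simp only [Set.mem_setOf_eq, Set.mem_univ, iff_true]
      exact ⟨y, by rw [(hunit y).1, (hunit y).2]⟩
    rw [h1, h1']
  · -- c ≠ 0 : annihilator is {0}, take f = 0
    refine ⟨0, Or.inl rfl, by rw [mul_zero], ?_⟩
    have h1 : {a : A | (c • e + m) * a * (c • e + m) = 0} = {0} := by
      ext a
      simp only [Set.mem_setOf_eq, Set.mem_singleton_iff]
      constructor
      · intro ha
        obtain ⟨c', m', hm', rfl⟩ := hdecomp a
        have hM : c • m' + c' • m ∈ N :=
          add_mem (Submodule.smul_mem _ _ hm') (Submodule.smul_mem _ _ hm)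
        rw [hmul c m hm c' m' hm', hmul (c * c') _ hM c m hm] at ha
        obtain ⟨h3, h4⟩ := huniq _ _
          (add_mem (Submodule.smul_mem _ _ hm) (Submodule.smul_mem _ _ hM)) ha
        have hc' : c' = 0 := by
          rcases mul_eq_zero.mp h3 with h | h
          · rcases mul_eq_zero.mp h with h' | h'
            · exact absurd h' hc
            · exact h'
          · exact absurd h hc
        rw [hc'] at h4
        simp only [mul_zero, zero_smul, zero_add, add_zero, smul_smul] at h4
        have hm'0 : m' = 0 := by
          rcases smul_eq_zero.mp h4 with h | h
          · exact absurd (mul_self_eq_zero.mp h) hc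
          · exact h
        rw [hc', hm'0]
        simp
      · rintro rfl
        rw [mul_zero, zero_mul]
    have h1' : {y : A | ∃ z : A, y = 0 * z * 0} = {0} := by
      ext y
      simp only [Set.mem_setOf_eq, Set.mem_singleton_iff, zero_mul, mul_zero]
      exact ⟨fun ⟨z, hz⟩ => hz, fun h => ⟨0, h⟩⟩
    rw [h1, h1']
end
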